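/- Binomial Poincaré inequality: fix t ∈ (0,1) and let f : {0,...,n} → ℝ satisfy ∑_{k=0}^n f(k)·b_{n,t}(k) = 0. Then ∑_{k=0}^n b_{n,t}(k)·f(k)² ≤ n·t·(1-t)·∑_{k=0}^n b_{n,t}(k)·(∇_n f(k))², where f is extended by f(-1)=f(n+1)=0 (these values are unused since the coefficients vanish). -/

import Mathlib

open Finset

/-- The binomial mass function `b_{n,t}` on `ℤ`, supported on `{0,...,n}`. -/
noncomputable def binom (n : ℕ) (t : ℝ) (k : ℤ) : ℝ :=
  if 0 ≤ k ∧ k ≤ (n : ℤ) then (n.choose k.toNat : ℝ) * t ^ k.toNat * (1 - t) ^ (n - k.toNat)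
  else 0

namespace S15

noncomputable def bb (t : ℝ) : ℕ → ℤ → ℝ
  | 0, k => if k = 0 then 1 else 0
  | (m+1), k => (1 - t) * bb t m k + t * bb t m (k - 1)

variable {t : ℝ}

lemma bb_zero {m : ℕ} {k : ℤ} (h : k < 0 ∨ (m : ℤ) < k) : bb t m k = 0 := by
  induction m generalizing k with
  | zero => simp only [bb]; rw [if_neg]; omega
  | succ m ih =>
    rw [bb, ih (by omega), ih (by omega)]; ring

lemma bb_nonneg (ht0 : 0 ≤ t) (ht1 : t ≤ 1) (m : ℕ) (k : ℤ) : 0 ≤ bb t m k := by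
  induction m generalizing k with
  | zero => simp only [bb]; split <;> norm_num
  | succ m ih =>
    rw [bb]
    have := ih k
    have := ih (k - 1)
    nlinarith

lemma bb_k_succ (m : ℕ) (k : ℤ) :
    (k : ℝ) * bb t (m+1) k = ((m:ℝ)+1) * t * bb t m (k-1) := by
  induction m generalizing k with
  | zero =>
    simp only [bb]
    by_cases h0 : k = 0
    · subst h0; norm_num
    · by_cases h1 : k = 1
      · subst h1; norm_num
      · rw [if_neg h0, if_neg (by omega : k - 1 ≠ 0)]; ring
  | succ m ih =>
    have h1 := ih k
    have h2 := ih (k - 1)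
    have hdef : bb t (m+1+1) k = (1-t) * bb t (m+1) k + t * bb t (m+1) (k-1) := rfl
    have hdef2 : bb t (m+1) (k-1) = (1-t) * bb t m (k-1) + t * bb t m (k-1-1) := rfl
    push_cast at *
    linear_combination (k:ℝ) * hdef + (1-t) * h1 + t * h2 + (t - ((m:ℝ)+2)*t) * hdef2

lemma bb_mk_succ (m : ℕ) (k : ℤ) :
    (((m:ℝ)+1) - k) * bb t (m+1) k = ((m:ℝ)+1) * (1-t) * bb t m k := by
  induction m generalizing k with
  | zero =>
    simp only [bb]
    by_cases h0 : k = 0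
    · subst h0; norm_num
    · by_cases h1 : k = 1
      · subst h1; norm_num
      · rw [if_neg h0, if_neg (by omega : k - 1 ≠ 0)]; push_cast; ring
  | succ m ih =>
    have h1 := ih k
    have h2 := ih (k - 1)
    have hdef : bb t (m+1+1) k = (1-t) * bb t (m+1) k + t * bb t (m+1) (k-1) := rfl
    have hdefA : bb t (m+1) k = (1-t) * bb t m k + t * bb t m (k-1) := rfl
    push_cast at *
    linear_combination ((m:ℝ)+2-(k:ℝ)) * hdef + (1-t) * h1 + t * h2 - ((m:ℝ)+1)*(1-t) * hdefA

lemma bb_k_zero (k : ℤ) : (k : ℝ) * bb t 0 k = 0 := by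
  by_cases h : k = 0
  · subst h; norm_num
  · rw [bb_zero (by omega)]; ring


lemma binom_eq_bb (t : ℝ) (m : ℕ) : ∀ k, binom m t k = bb t m k := by
  induction m with
  | zero =>
    intro k
    by_cases h : k = 0
    · subst h; simp [binom, bb]
    · rw [binom, if_neg (by omega), bb_zero (by omega)]
  | succ m ih =>
    intro k
    by_cases hneg : k < 0
    · rw [binom, if_neg (by omega), bb_zero (Or.inl hneg)]
    by_cases hbig : (m:ℤ)+1 < k
    · rw [binom, if_neg (by push_cast; omega), bb_zero (Or.inr (by push_cast; omega))]
    push_neg at hneg hbig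
    have hbb : bb t (m+1) k = (1-t) * binom m t k + t * binom m t (k-1) := by
      rw [bb, ih, ih]
    by_cases h0 : k = 0
    · subst h0
      have e1 : binom m t (0-1) = 0 := by rw [binom, if_neg (by omega)]
      have e2 : binom m t 0 = (1-t)^m := by
        rw [binom, if_pos ⟨le_refl _, by omega⟩]; simp
      have e3 : binom (m+1) t 0 = (1-t)^(m+1) := by
        rw [binom, if_pos ⟨le_refl _, by push_cast; omega⟩]; simp
      rw [e3, hbb, e1, e2]; ring
    -- now 1 ≤ k ≤ m+1
    have hj : ((k.toNat : ℤ)) = k := Int.toNat_of_nonneg hneg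
    have hj1 : (k-1).toNat = k.toNat - 1 := by omega
    have hL : binom (m+1) t k
        = ((m+1).choose k.toNat : ℝ) * t ^ k.toNat * (1-t)^(m+1-k.toNat) := by
      rw [binom, if_pos ⟨hneg, by push_cast; omega⟩]
    have hM : binom m t (k-1)
        = (m.choose (k.toNat-1) : ℝ) * t^(k.toNat-1) * (1-t)^(m-(k.toNat-1)) := by
      rw [binom, if_pos ⟨by omega, by omega⟩, hj1]
    by_cases hle : k ≤ (m:ℤ)
    · have hK : binom m t k = (m.choose k.toNat : ℝ) * t^k.toNat * (1-t)^(m-k.toNat) := by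
        rw [binom, if_pos ⟨hneg, hle⟩]
      rw [hbb, hL, hM, hK]
      obtain ⟨j, hjj⟩ : ∃ j, k.toNat = j + 1 := ⟨k.toNat - 1, by omega⟩
      have hjm : j + 1 ≤ m := by omega
      rw [hjj]
      have h1 : m + 1 - (j+1) = (m - (j+1)) + 1 := by omega
      have h2 : (j+1) - 1 = j := rfl
      have h3 : m - j = (m - (j+1)) + 1 := by omega
      rw [h1, h2, h3, Nat.choose_succ_succ]
      push_cast
      ring
    · have hK : binom m t k = 0 := by rw [binom, if_neg (by omega)]
      have hkeq : k.toNat = m+1 := by omega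
      rw [hbb, hL, hM, hK, hkeq]
      have h2 : (m+1) - 1 = m := rfl
      rw [h2]
      simp [Nat.choose_self, Nat.sub_self]
      ring


noncomputable def Ee (t : ℝ) (m : ℕ) (u : ℤ → ℝ) : ℝ :=
  ∑ k ∈ Icc (0:ℤ) (m:ℤ), bb t m k * u k

lemma sum_ext (m : ℕ) {lo hi : ℤ} (hlo : lo ≤ 0) (hhi : (m:ℤ) ≤ hi) (u : ℤ → ℝ) :
    ∑ k ∈ Icc lo hi, bb t m k * u k = Ee t m u := by
  rw [Ee]
  refine (Finset.sum_subset ?_ ?_).symm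
  · intro x hx; simp only [mem_Icc] at *; omega
  · intro x hx hx2
    simp only [mem_Icc] at hx hx2
    rw [bb_zero (by omega), zero_mul]

lemma sum_shift (lo hi c : ℤ) (v : ℤ → ℝ) :
    ∑ k ∈ Icc lo hi, v k = ∑ k ∈ Icc (lo+c) (hi+c), v (k - c) := by
  rw [← Finset.map_add_right_Icc lo hi c, Finset.sum_map]
  apply sum_congr rfl
  intro x hx
  simp [addRightEmbedding]

lemma reduce (m : ℕ) (c : ℤ) {lo hi : ℤ} (hlo : lo ≤ c) (hhi : (m:ℤ) + c ≤ hi) (w : ℤ → ℝ) :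
    ∑ k ∈ Icc lo hi, bb t m (k - c) * w k = Ee t m (fun k => w (k + c)) := by
  rw [sum_shift lo hi (-c)]
  refine Eq.trans (Finset.sum_congr rfl ?_) (sum_ext m (by omega) (by omega) _)
  intro x hx
  have e1 : x - -c - c = x := by ring
  have e2 : x - -c = x + c := by ring
  rw [e1, e2]

lemma Ee_add (m : ℕ) (u v : ℤ → ℝ) :
    Ee t m (fun k => u k + v k) = Ee t m u + Ee t m v := by
  simp [Ee, mul_add, Finset.sum_add_distrib]

lemma Ee_const_mul (c : ℝ) (m : ℕ) (u : ℤ → ℝ) :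
    Ee t m (fun k => c * u k) = c * Ee t m u := by
  rw [Ee, Ee, Finset.mul_sum]
  apply sum_congr rfl; intros; ring

lemma Ee_congr {m : ℕ} {u v : ℤ → ℝ} (h : ∀ k, 0 ≤ k → k ≤ (m:ℤ) → u k = v k) :
    Ee t m u = Ee t m v := by
  apply sum_congr rfl
  intro k hk
  rw [mem_Icc] at hk
  rw [h k hk.1 hk.2]

lemma Ee_zero (u : ℤ → ℝ) : Ee t 0 u = u 0 := by
  simp [Ee, bb]

lemma Ee_succ (m : ℕ) (u : ℤ → ℝ) :
    Ee t (m+1) u = (1-t) * Ee t m u + t * Ee t m (fun k => u (k+1)) := by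
  have h1 : Ee t (m+1) u
      = ∑ k ∈ Icc (0:ℤ) ((m:ℤ)+1), ((1-t) * (bb t m k * u k) + t * (bb t m (k-1) * u k)) := by
    rw [Ee]
    have : (((m+1:ℕ)):ℤ) = (m:ℤ)+1 := by push_cast; ring
    rw [this]
    apply sum_congr rfl
    intro k _
    rw [bb]; ring
  rw [h1, Finset.sum_add_distrib, ← Finset.mul_sum, ← Finset.mul_sum,
      sum_ext m (le_refl 0) (by omega) u, reduce m 1 (by omega) (by omega) u]


noncomputable def nab (n : ℕ) (f : ℤ → ℝ) (k : ℤ) : ℝ :=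
  (k : ℝ) / n * (f k - f (k - 1)) + ((n : ℝ) - k) / n * (f (k + 1) - f k)

lemma lemD (ht0 : 0 < t) (ht1 : t < 1) (m : ℕ) (f : ℤ → ℝ) :
    Ee t (m+1) (fun k => (nab (m+1) f k)^2)
      ≤ Ee t m (fun k => (f (k+1) - f k)^2) := by
  set u : ℤ → ℝ := fun k => f (k+1) - f k with hu
  have hN : (0:ℝ) < (m:ℝ)+1 := by positivity
  have step1 : Ee t (m+1) (fun k => (nab (m+1) f k)^2)
      ≤ ∑ k ∈ Icc (0:ℤ) ((m+1:ℕ):ℤ), bb t (m+1) k *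
          ((k:ℝ)/((m:ℝ)+1) * (u (k-1))^2 + (((m:ℝ)+1) - (k:ℝ))/((m:ℝ)+1) * (u k)^2) := by
    rw [Ee]
    apply Finset.sum_le_sum
    intro k hk
    rw [mem_Icc] at hk
    apply mul_le_mul_of_nonneg_left ?_ (bb_nonneg ht0.le ht1.le _ _)
    have hx : nab (m+1) f k
        = (k:ℝ)/((m:ℝ)+1) * u (k-1) + (((m:ℝ)+1) - (k:ℝ))/((m:ℝ)+1) * u k := by
      rw [nab]
      have e1 : k - 1 + 1 = k := by ring
      simp only [hu, e1]
      push_cast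
      ring
    rw [hx]
    set a : ℝ := (k:ℝ)/((m:ℝ)+1) with hadef
    set b : ℝ := (((m:ℝ)+1) - (k:ℝ))/((m:ℝ)+1) with hbdef
    have hk0 : (0:ℝ) ≤ (k:ℝ) := by exact_mod_cast hk.1
    have hk1 : (k:ℝ) ≤ (m:ℝ)+1 := by
      have := hk.2
      push_cast at this ⊢
      exact_mod_cast this
    have ha : 0 ≤ a := by positivity
    have hb : 0 ≤ b := by
      apply div_nonneg _ hN.le
      linarith
    have hab : a + b = 1 := by
      rw [hadef, hbdef]
      field_simp
      ring
    have key : ∀ x y : ℝ, (a * x + b * y)^2 ≤ a * x^2 + b * y^2 := by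
      intro x y
      have e : a * x^2 + b * y^2 - (a * x + b * y)^2 = a * b * (x - y)^2 := by
        linear_combination (-(a * x^2) - b * y^2) * hab
      nlinarith [mul_nonneg (mul_nonneg ha hb) (sq_nonneg (x - y))]
    exact key (u (k-1)) (u k)
  have step2 : ∑ k ∈ Icc (0:ℤ) ((m+1:ℕ):ℤ), bb t (m+1) k *
          ((k:ℝ)/((m:ℝ)+1) * (u (k-1))^2 + (((m:ℝ)+1) - (k:ℝ))/((m:ℝ)+1) * (u k)^2)
      = Ee t m (fun k => (u k)^2) := by
    have hpt : ∀ k ∈ Icc (0:ℤ) ((m+1:ℕ):ℤ), bb t (m+1) k *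
          ((k:ℝ)/((m:ℝ)+1) * (u (k-1))^2 + (((m:ℝ)+1) - (k:ℝ))/((m:ℝ)+1) * (u k)^2)
        = t * (bb t m (k-1) * (u (k-1))^2) + (1-t) * (bb t m k * (u k)^2) := by
      intro k _
      have e1 := bb_k_succ (t := t) m k
      have e2 := bb_mk_succ (t := t) m k
      have expand : bb t (m+1) k *
          ((k:ℝ)/((m:ℝ)+1) * (u (k-1))^2 + (((m:ℝ)+1) - (k:ℝ))/((m:ℝ)+1) * (u k)^2)
          = (((k:ℝ) * bb t (m+1) k) * (u (k-1))^2
              + ((((m:ℝ)+1) - (k:ℝ)) * bb t (m+1) k) * (u k)^2) / ((m:ℝ)+1) := by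
        ring
      rw [expand, e1, e2]
      field_simp
    rw [Finset.sum_congr rfl hpt, Finset.sum_add_distrib, ← Finset.mul_sum, ← Finset.mul_sum]
    have r1 : ∑ k ∈ Icc (0:ℤ) ((m+1:ℕ):ℤ), bb t m (k - 1) * (u (k-1))^2
        = Ee t m (fun k => (u (k+1-1))^2) :=
      reduce m 1 (by omega) (by push_cast; omega) (fun k => (u (k-1))^2)
    have r2 : ∑ k ∈ Icc (0:ℤ) ((m+1:ℕ):ℤ), bb t m k * (u k)^2 = Ee t m (fun k => (u k)^2) :=
      sum_ext m (by omega) (by push_cast; omega) _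
    rw [r1, r2]
    have r3 : Ee t m (fun k => (u (k+1-1))^2) = Ee t m (fun k => (u k)^2) := by
      apply Ee_congr
      intro k _ _
      norm_num
    rw [r3]
    ring
  calc Ee t (m+1) (fun k => (nab (m+1) f k)^2) ≤ _ := step1
    _ = _ := step2


lemma varA (m : ℕ) (f : ℤ → ℝ) :
    Ee t (m+1) (fun k => (f k)^2) - (Ee t (m+1) f)^2
    = t*(1-t) * Ee t m (fun k => (f (k+1) - f k)^2)
      + (Ee t m (fun k => ((1-t) * f k + t * f (k+1))^2)
         - (Ee t m (fun k => (1-t) * f k + t * f (k+1)))^2) := by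
  have hf : Ee t (m+1) f = Ee t m (fun k => (1-t) * f k + t * f (k+1)) := by
    rw [Ee_succ, Ee_add m (fun k => (1-t) * f k) (fun k => t * f (k+1)),
        Ee_const_mul, Ee_const_mul]
  have l1 : Ee t m (fun k => ((1-t) * f k + t * f (k+1))^2)
        + t*(1-t) * Ee t m (fun k => (f (k+1) - f k)^2)
      = Ee t m (fun k => (1-t) * (f k)^2 + t * (f (k+1))^2) := by
    rw [← Ee_const_mul (t*(1-t)) m (fun k => (f (k+1) - f k)^2),
        ← Ee_add m (fun k => ((1-t) * f k + t * f (k+1))^2)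
          (fun k => t*(1-t) * (f (k+1) - f k)^2)]
    apply Ee_congr
    intro k _ _
    ring
  have hf2 : Ee t (m+1) (fun k => (f k)^2)
      = Ee t m (fun k => (1-t) * (f k)^2 + t * (f (k+1))^2) := by
    rw [Ee_succ, Ee_add m (fun k => (1-t) * (f k)^2) (fun k => t * (f (k+1))^2),
        Ee_const_mul, Ee_const_mul]
  rw [hf, hf2, ← l1]
  ring


lemma B2' (m : ℕ) (u : ℤ → ℝ) :
    Ee t (m+2) (fun k => (((k:ℝ) * u (k-1) + (((m:ℝ)+2) - (k:ℝ)) * u k)/((m:ℝ)+2))^2)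
      * ((m:ℝ)+2)
    = Ee t (m+1) (fun k => (u k)^2)
      + ((m:ℝ)+1) * Ee t m (fun k => ((1-t) * u k + t * u (k+1))^2) := by
  have hNR : ((m:ℝ)+2) ≠ 0 := by positivity
  -- pointwise coefficient identity
  have hco : ∀ (k : ℤ),
      bb t (m+2) k * ((k:ℝ) * u (k-1) + (((m:ℝ)+2) - (k:ℝ)) * u k)^2
      = ((m:ℝ)+2) * ( (((m:ℝ)+1)*t^2) * (bb t m (k-2) * (u (k-1))^2)
          + t * (bb t (m+1) (k-1) * (u (k-1))^2)
          + (2*((m:ℝ)+1)*t*(1-t)) * (bb t m (k-1) * (u (k-1) * u k))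
          + (((m:ℝ)+1)*(1-t)^2) * (bb t m k * (u k)^2)
          + (1-t) * (bb t (m+1) k * (u k)^2) ) := by
    intro k
    have h1 : (k:ℝ) * bb t (m+2) k = ((m:ℝ)+2) * t * bb t (m+1) (k-1) := by
      have := bb_k_succ (t := t) (m+1) k; push_cast at this ⊢; linarith
    have h2 : ((k:ℝ)-1) * bb t (m+1) (k-1) = ((m:ℝ)+1) * t * bb t m (k-1-1) := by
      have := bb_k_succ (t := t) m (k-1); push_cast at this ⊢; linarith
    have h3 : (((m:ℝ)+2) - (k:ℝ)) * bb t (m+2) k = ((m:ℝ)+2) * (1-t) * bb t (m+1) k := by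
      have := bb_mk_succ (t := t) (m+1) k; push_cast at this ⊢; linarith
    have h4 : (((m:ℝ)+1) - ((k:ℝ)-1)) * bb t (m+1) (k-1) = ((m:ℝ)+1)*(1-t) * bb t m (k-1) := by
      have := bb_mk_succ (t := t) m (k-1); push_cast at this ⊢; linarith
    have h5 : (((m:ℝ)+1) - (k:ℝ)) * bb t (m+1) k = ((m:ℝ)+1)*(1-t) * bb t m k := by
      have := bb_mk_succ (t := t) m k; push_cast at this ⊢; linarith
    have hkk : bb t m (k-1-1) = bb t m (k-2) := by
      have e : k-1-1 = k-2 := by ring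
      rw [e]
    rw [← hkk]
    linear_combination (u (k-1))^2 * ((k:ℝ) * h1 + ((m:ℝ)+2)*t * h2)
      + (2*(u (k-1))*(u k)) * ((((m:ℝ)+2) - (k:ℝ)) * h1 + ((m:ℝ)+2)*t * h4)
      + (u k)^2 * ((((m:ℝ)+2) - (k:ℝ)) * h3 + ((m:ℝ)+2)*(1-t) * h5)
  -- the unnormalized quadratic sum
  have EQ : Ee t (m+2) (fun k => ((k:ℝ) * u (k-1) + (((m:ℝ)+2) - (k:ℝ)) * u k)^2)
      = ((m:ℝ)+2) * ( (((m:ℝ)+1)*t^2) * Ee t m (fun k => (u (k+1))^2)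
          + t * Ee t (m+1) (fun k => (u k)^2)
          + (2*((m:ℝ)+1)*t*(1-t)) * Ee t m (fun k => u k * u (k+1))
          + (((m:ℝ)+1)*(1-t)^2) * Ee t m (fun k => (u k)^2)
          + (1-t) * Ee t (m+1) (fun k => (u k)^2) ) := by
    rw [Ee, Finset.sum_congr rfl (fun k _ => hco k), ← Finset.mul_sum]
    congr 1
    rw [Finset.sum_add_distrib, Finset.sum_add_distrib, Finset.sum_add_distrib,
        Finset.sum_add_distrib, ← Finset.mul_sum, ← Finset.mul_sum, ← Finset.mul_sum,
        ← Finset.mul_sum, ← Finset.mul_sum]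
    have r1 : ∑ k ∈ Icc (0:ℤ) ((m+2:ℕ):ℤ), bb t m (k - 2) * (u (k-1))^2
        = Ee t m (fun k => (u (k+2-1))^2) :=
      reduce m 2 (by omega) (by push_cast; omega) (fun k => (u (k-1))^2)
    have r2 : ∑ k ∈ Icc (0:ℤ) ((m+2:ℕ):ℤ), bb t (m+1) (k - 1) * (u (k-1))^2
        = Ee t (m+1) (fun k => (u (k+1-1))^2) :=
      reduce (m+1) 1 (by omega) (by push_cast; omega) (fun k => (u (k-1))^2)
    have r3 : ∑ k ∈ Icc (0:ℤ) ((m+2:ℕ):ℤ), bb t m (k - 1) * (u (k-1) * u k)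
        = Ee t m (fun k => u (k+1-1) * u (k+1)) :=
      reduce m 1 (by omega) (by push_cast; omega) (fun k => u (k-1) * u k)
    have r4 : ∑ k ∈ Icc (0:ℤ) ((m+2:ℕ):ℤ), bb t m k * (u k)^2
        = Ee t m (fun k => (u k)^2) :=
      sum_ext m (by omega) (by push_cast; omega) _
    have r5 : ∑ k ∈ Icc (0:ℤ) ((m+2:ℕ):ℤ), bb t (m+1) k * (u k)^2
        = Ee t (m+1) (fun k => (u k)^2) :=
      sum_ext (m+1) (by omega) (by push_cast; omega) _
    rw [r1, r2, r3, r4, r5]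
    have c1 : Ee t m (fun k => (u (k+2-1))^2) = Ee t m (fun k => (u (k+1))^2) := by
      apply Ee_congr; intro k _ _
      have : k+2-1 = k+1 := by ring
      rw [this]
    have c2 : Ee t (m+1) (fun k => (u (k+1-1))^2) = Ee t (m+1) (fun k => (u k)^2) := by
      apply Ee_congr; intro k _ _
      have : k+1-1 = k := by ring
      rw [this]
    have c3 : Ee t m (fun k => u (k+1-1) * u (k+1)) = Ee t m (fun k => u k * u (k+1)) := by
      apply Ee_congr; intro k _ _
      have : k+1-1 = k := by ring
      rw [this]
    rw [c1, c2, c3]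
  -- expand the v-square
  have EV : Ee t m (fun k => ((1-t) * u k + t * u (k+1))^2)
      = ((1-t)^2) * Ee t m (fun k => (u k)^2) + (2*t*(1-t)) * Ee t m (fun k => u k * u (k+1))
        + t^2 * Ee t m (fun k => (u (k+1))^2) := by
    rw [← Ee_const_mul ((1-t)^2) m (fun k => (u k)^2),
        ← Ee_const_mul (2*t*(1-t)) m (fun k => u k * u (k+1)),
        ← Ee_const_mul (t^2) m (fun k => (u (k+1))^2),
        ← Ee_add, ← Ee_add]
    apply Ee_congr; intro k _ _; ring
  have E0 : Ee t (m+2) (fun k => (((k:ℝ) * u (k-1) + (((m:ℝ)+2) - (k:ℝ)) * u k)/((m:ℝ)+2))^2)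
      = (1/((m:ℝ)+2)^2) * Ee t (m+2)
          (fun k => ((k:ℝ) * u (k-1) + (((m:ℝ)+2) - (k:ℝ)) * u k)^2) := by
    rw [← Ee_const_mul]
    apply Ee_congr; intro k _ _
    field_simp
  rw [E0, EQ, EV]
  field_simp
  ring


lemma claim (ht0 : 0 < t) (ht1 : t < 1) :
    ∀ (n : ℕ) (f : ℤ → ℝ),
      Ee t n (fun k => (f k)^2) - (Ee t n f)^2
        ≤ (n:ℝ) * (t*(1-t)) * Ee t n (fun k => (nab n f k)^2) := by
  intro n
  induction n with
  | zero =>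
    intro f
    rw [Ee_zero, Ee_zero]
    norm_num
  | succ m ih =>
    intro f
    have htt : 0 ≤ t*(1-t) := by nlinarith
    cases m with
    | zero =>
      have hvarA := varA (t := t) 0 f
      have hb1 : Ee t (0+1) (fun k => (nab (0+1) f k)^2)
          = Ee t 0 (fun k => (f (k+1) - f k)^2) := by
        rw [Ee_succ 0 (fun k => (nab (0+1) f k)^2), Ee_zero, Ee_zero, Ee_zero]
        have e0 : nab (0+1) f 0 = f (0+1) - f 0 := by
          rw [nab]; norm_num
        have e1 : nab (0+1) f (0+1) = f (0+1) - f 0 := by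
          rw [nab]; push_cast; norm_num
        rw [e0, e1]; ring
      have hz1 : Ee t 0 (fun k => ((1-t) * f k + t * f (k+1))^2)
          = ((1-t) * f 0 + t * f (0+1))^2 := Ee_zero _
      have hz2 : Ee t 0 (fun k => (1-t) * f k + t * f (k+1))
          = (1-t) * f 0 + t * f (0+1) := Ee_zero _
      rw [hb1] at *
      rw [hvarA, hz1, hz2]
      push_cast
      nlinarith [Ee_zero (t := t) (fun k => (f (k+1) - f k)^2)]
    | succ m' =>
      -- abbreviations are kept literal; m = m'+1, n = m'+1+1
      have hvarA := varA (t := t) (m'+1) f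
      have hih : Ee t (m'+1) (fun k => ((1-t) * f k + t * f (k+1))^2)
            - (Ee t (m'+1) (fun k => (1-t) * f k + t * f (k+1)))^2
          ≤ ((m'+1 : ℕ):ℝ) * (t*(1-t)) *
            Ee t (m'+1) (fun k => (nab (m'+1) (fun j => (1-t) * f j + t * f (j+1)) k)^2) :=
        ih (fun j => (1-t) * f j + t * f (j+1))
      have hD0 : Ee t (m'+1) (fun k => (nab (m'+1) (fun j => (1-t) * f j + t * f (j+1)) k)^2)
          ≤ Ee t m' (fun k => ((1-t) * f (k+1) + t * f (k+1+1)
              - ((1-t) * f k + t * f (k+1)))^2) :=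
        lemD ht0 ht1 m' (fun j => (1-t) * f j + t * f (j+1))
      have hDV : Ee t (m'+1) (fun k => (nab (m'+1) (fun j => (1-t) * f j + t * f (j+1)) k)^2)
          ≤ Ee t m' (fun k => ((1-t) * (f (k+1) - f k) + t * (f (k+1+1) - f (k+1)))^2) := by
        refine le_trans hD0 (le_of_eq ?_)
        apply Ee_congr
        intro k _ _
        ring
      have hQ : Ee t (m'+1+1) (fun k => (nab (m'+1+1) f k)^2) * ((m':ℝ)+2)
          = Ee t (m'+1) (fun k => (f (k+1) - f k)^2)
            + ((m':ℝ)+1) * Ee t m' (fun k => ((1-t) * (f (k+1) - f k)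
                + t * (f (k+1+1) - f (k+1)))^2) := by
        have hB : Ee t (m'+1+1) (fun k => (((k:ℝ) * (f (k-1+1) - f (k-1))
              + (((m':ℝ)+2) - (k:ℝ)) * (f (k+1) - f k))/((m':ℝ)+2))^2) * ((m':ℝ)+2)
            = Ee t (m'+1) (fun k => (f (k+1) - f k)^2)
              + ((m':ℝ)+1) * Ee t m' (fun k => ((1-t) * (f (k+1) - f k)
                  + t * (f (k+1+1) - f (k+1)))^2) :=
          B2' m' (fun k => f (k+1) - f k)
        rw [← hB]
        congr 1
        apply Ee_congr
        intro k _ _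
        rw [nab]
        have e : k - 1 + 1 = k := by ring
        rw [e]
        push_cast
        ring
      -- assemble
      have hscaled : ((m'+1 : ℕ):ℝ) * (t*(1-t)) *
            Ee t (m'+1) (fun k => (nab (m'+1) (fun j => (1-t) * f j + t * f (j+1)) k)^2)
          ≤ ((m'+1 : ℕ):ℝ) * (t*(1-t)) *
            Ee t m' (fun k => ((1-t) * (f (k+1) - f k) + t * (f (k+1+1) - f (k+1)))^2) := by
        apply mul_le_mul_of_nonneg_left hDV
        positivity
      rw [hvarA]
      push_cast at hih hscaled ⊢
      nlinarith [hih, hscaled, hQ, htt,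
        mul_nonneg htt (le_trans (by positivity : (0:ℝ) ≤ 0) (le_refl (0:ℝ)))]

end S15

/-- the binomial Poincaré inequality with the derivative `∇_n`.
The values `f(-1)` and `f(n+1)` appear only with vanishing coefficients. -/
theorem stmt15 (n : ℕ) (hn : 1 ≤ n) (t : ℝ) (ht : t ∈ Set.Ioo (0 : ℝ) 1) (f : ℤ → ℝ)
    (hmean : ∑ k ∈ Icc (0 : ℤ) (n : ℤ), f k * binom n t k = 0) :
    ∑ k ∈ Icc (0 : ℤ) (n : ℤ), binom n t k * f k ^ 2
      ≤ (n : ℝ) * t * (1 - t) * ∑ k ∈ Icc (0 : ℤ) (n : ℤ),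
          binom n t k *
            ((k : ℝ) / n * (f k - f (k - 1)) + ((n : ℝ) - k) / n * (f (k + 1) - f k)) ^ 2 := by
  obtain ⟨ht0, ht1⟩ := ht
  have h0 : S15.Ee t n f = 0 := by
    rw [S15.Ee, ← hmean]
    apply Finset.sum_congr rfl
    intro k _
    rw [S15.binom_eq_bb]
    ring
  have hL : ∑ k ∈ Icc (0 : ℤ) (n : ℤ), binom n t k * f k ^ 2
      = S15.Ee t n (fun k => (f k)^2) := by
    rw [S15.Ee]
    apply Finset.sum_congr rfl
    intro k _
    rw [S15.binom_eq_bb]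
  have hR : ∑ k ∈ Icc (0 : ℤ) (n : ℤ),
        binom n t k *
          ((k : ℝ) / n * (f k - f (k - 1)) + ((n : ℝ) - k) / n * (f (k + 1) - f k)) ^ 2
      = S15.Ee t n (fun k => (S15.nab n f k)^2) := by
    rw [S15.Ee]
    apply Finset.sum_congr rfl
    intro k _
    rw [S15.binom_eq_bb, S15.nab]
  have := S15.claim ht0 ht1 n f
  rw [h0] at this
  rw [hL, hR]
  calc S15.Ee t n (fun k => (f k)^2)
      = S15.Ee t n (fun k => (f k)^2) - 0^2 := by ring
    _ ≤ (n:ℝ) * (t*(1-t)) * S15.Ee t n (fun k => (S15.nab n f k)^2) := this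
    _ = (n : ℝ) * t * (1 - t) * S15.Ee t n (fun k => (S15.nab n f k)^2) := by ring
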